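/- The second coefficient a_2 of the Taylor expansion of Z(s, x-r) (|r|=1) equals ζ(2)/4 = π²/24; equivalently, the second higher Mahler measure m_2(x-r) = ∫₀¹ log²|e^{2πiθ} - r| dθ = π²/12 for |r| = 1. -/

import Mathlib

open Real Complex intervalIntegral MeasureTheory Set Filter


lemma abs_lower (ρ θ : ℝ) (h0 : 0 ≤ ρ) :
    Real.sin (θ/2) ≤ ‖1 - (ρ:ℂ) * Complex.exp (θ * Complex.I)‖ := by
  have hs : Real.sin (θ/2) ^ 2 ≤ ‖1 - (ρ:ℂ) * Complex.exp (θ * Complex.I)‖ ^ 2 := by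
    rw [← Complex.normSq_eq_norm_sq]
    have h : ((1 : ℂ) - (ρ:ℂ) * Complex.exp (θ * Complex.I)) =
        Complex.mk (1 - ρ * Real.cos θ) (-(ρ * Real.sin θ)) := by
      rw [Complex.exp_mul_I]
      push_cast
      simp [Complex.ext_iff, Complex.cos_ofReal_re, Complex.sin_ofReal_re]
    rw [h, Complex.normSq_mk]
    have hsq : Real.sin (θ/2) ^ 2 = (1 - Real.cos θ) / 2 := by
      rw [Real.sin_sq_eq_half_sub]; ring_nf
    have hc1 : Real.cos θ ≤ 1 := Real.cos_le_one θ
    have hc2 : -1 ≤ Real.cos θ := Real.neg_one_le_cos θ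
    have hpy : Real.sin θ ^ 2 = 1 - Real.cos θ ^ 2 := by
      have := Real.sin_sq_add_cos_sq θ; linarith
    rw [hsq]
    have key : (1 - ρ * Real.cos θ) * (1 - ρ * Real.cos θ) +
        -(ρ * Real.sin θ) * -(ρ * Real.sin θ) = 1 - 2*ρ*Real.cos θ + ρ^2 := by
      linear_combination ρ^2 * hpy
    rw [key]
    rcases le_or_gt (-(1:ℝ)/2) (Real.cos θ) with hc | hc
    · nlinarith [sq_nonneg (ρ - Real.cos θ), mul_nonneg (by linarith : (0:ℝ) ≤ 1 - Real.cos θ)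
        (by linarith : (0:ℝ) ≤ 1 + 2 * Real.cos θ)]
    · nlinarith [mul_nonpos_of_nonneg_of_nonpos h0 (by linarith : Real.cos θ ≤ 0), sq_nonneg ρ]
  rcases le_or_gt (Real.sin (θ/2)) 0 with h | h
  · exact h.trans (norm_nonneg _)
  · nlinarith [norm_nonneg (1 - (ρ:ℂ) * Complex.exp (θ * Complex.I))]

lemma sq_log_le {s : ℝ} (h0 : 0 < s) (h1 : s ≤ 1) :
    (Real.log s)^2 ≤ 16 / Real.sqrt s := by
  set u := Real.sqrt (Real.sqrt s) with hu
  have hsp : 0 < Real.sqrt s := Real.sqrt_pos.2 h0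
  have hup : 0 < u := Real.sqrt_pos.2 hsp
  have hu2 : u^2 = Real.sqrt s := Real.sq_sqrt hsp.le
  have hlog : Real.log s = 4 * Real.log u := by
    rw [hu, Real.log_sqrt hsp.le, Real.log_sqrt h0.le]; ring
  have hune : -Real.log u ≤ 1/u := by
    have := Real.log_le_sub_one_of_pos (x := u⁻¹) (by positivity)
    rw [Real.log_inv] at this
    have : -Real.log u ≤ u⁻¹ - 1 := by linarith
    have h2 : u⁻¹ - 1 ≤ 1/u := by rw [one_div]; linarith
    linarith
  have hu1 : u ≤ 1 := by
    rw [hu]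
    have : Real.sqrt s ≤ 1 := by
      rw [show (1:ℝ) = Real.sqrt 1 by simp]; exact Real.sqrt_le_sqrt h1
    calc Real.sqrt (Real.sqrt s) ≤ Real.sqrt 1 := Real.sqrt_le_sqrt this
      _ = 1 := by simp
  have hneg : Real.log u ≤ 0 := Real.log_nonpos hup.le hu1
  have hsq : (Real.log u)^2 ≤ (1/u)^2 := by
    rw [← neg_sq (Real.log u)]
    apply sq_le_sq' <;> nlinarith [hune, one_div_pos.2 hup]
  calc (Real.log s)^2 = 16 * (Real.log u)^2 := by rw [hlog]; ring
    _ ≤ 16 * (1/u)^2 := by linarith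
    _ = 16 / Real.sqrt s := by rw [div_pow, one_pow, hu2]; ring

lemma norm_log_sq_bound (ρ θ : ℝ) (h0 : 0 ≤ ρ) (h1 : ρ ≤ 1)
    (hθs : 0 < Real.sin (θ/2)) :
    ‖(Complex.log (1 - (ρ:ℂ) * Complex.exp (θ * Complex.I)))^2‖ ≤
      2*(Real.pi + Real.log 2)^2 + 32 / Real.sqrt (Real.sin (θ/2)) := by
  set w : ℂ := 1 - (ρ:ℂ) * Complex.exp (θ * Complex.I) with hwdef
  set s := Real.sin (θ/2) with hs
  have hsw : s ≤ ‖w‖ := abs_lower ρ θ h0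
  have hwpos : 0 < ‖w‖ := lt_of_lt_of_le hθs hsw
  have hw2 : ‖w‖ ≤ 2 := by
    calc ‖w‖ = ‖w‖ := rfl
      _ ≤ ‖(1:ℂ)‖ + ‖(ρ:ℂ) * Complex.exp (θ * Complex.I)‖ := norm_sub_le _ _
      _ ≤ 1 + 1 := by
          simp [Complex.norm_exp]
          rw [_root_.abs_of_nonneg h0]; exact h1
      _ = 2 := by norm_num
  have hs1 : s ≤ 1 := Real.sin_le_one _
  have hlogs : Real.log s ≤ 0 := Real.log_nonpos hθs.le hs1
  have h2 : (0:ℝ) ≤ Real.log 2 := Real.log_nonneg one_le_two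
  have habs : |Real.log (‖w‖)| ≤ Real.log 2 - Real.log s := by
    rw [abs_le]
    constructor
    · have := Real.log_le_log hθs hsw
      linarith
    · have := Real.log_le_log hwpos hw2
      linarith
  have hnorm : ‖Complex.log w‖ ≤ (Real.pi + Real.log 2) + (- Real.log s) := by
    calc ‖Complex.log w‖ = ‖Complex.log w‖ := rfl
      _ ≤ |(Complex.log w).re| + |(Complex.log w).im| := Complex.norm_le_abs_re_add_abs_im _
      _ = |Real.log (‖w‖)| + |Complex.arg w| := by rw [Complex.log_re, Complex.log_im]
      _ ≤ (Real.log 2 - Real.log s) + Real.pi := add_le_add habs (Complex.abs_arg_le_pi _)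
      _ = (Real.pi + Real.log 2) + (- Real.log s) := by ring
  have hlog2 : (Real.log s)^2 ≤ 16 / Real.sqrt s := sq_log_le hθs hs1
  calc ‖(Complex.log w)^2‖ = ‖Complex.log w‖^2 := by rw [norm_pow]
    _ ≤ ((Real.pi + Real.log 2) + (- Real.log s))^2 := by
        apply sq_le_sq' <;> nlinarith [norm_nonneg (Complex.log w)]
    _ ≤ 2*(Real.pi + Real.log 2)^2 + 2*(Real.log s)^2 := by nlinarith [sq_nonneg ((Real.pi + Real.log 2) - (- Real.log s))]
    _ ≤ 2*(Real.pi + Real.log 2)^2 + 32 / Real.sqrt s := by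
        have h32 : (32:ℝ) / Real.sqrt s = 2 * (16 / Real.sqrt s) := by ring
        rw [h32]; linarith [hlog2]

lemma cauchy_step {ρ : ℝ} (h0 : 0 < ρ) (h1 : ρ < 1) :
    ∫ θ in (0:ℝ)..(2*Real.pi), (Complex.log (1 - (ρ:ℂ) * Complex.exp (θ * Complex.I)))^2 = 0 := by
  set f : ℂ → ℂ := fun z => (Complex.log (1 - z))^2 with hf
  have hdiff : ∀ z : ℂ, ‖z‖ < 1 → DifferentiableAt ℂ f z := by
    intro z hz
    have hre : 0 < (1 - z).re := by
      simp only [Complex.sub_re, Complex.one_re]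
      have : |z.re| < 1 := lt_of_le_of_lt (Complex.abs_re_le_norm z) hz
      cases' abs_lt.1 this with h h'
      linarith
    have hslit : (1 - z) ∈ Complex.slitPlane := Or.inl hre
    exact (((differentiable_const (1:ℂ)).sub differentiable_id).differentiableAt.clog hslit).pow 2
  have hd : DiffContOnCl ℂ f (Metric.ball 0 ρ) := by
    apply DifferentiableOn.diffContOnCl
    intro z hz
    rw [closure_ball _ h0.ne'] at hz
    exact (hdiff z (lt_of_le_of_lt (by simpa using hz) h1)).differentiableWithinAt
  have hball : (0:ℂ) ∈ Metric.ball (0:ℂ) ρ := by simpa using h0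
  have hC := hd.circleIntegral_sub_inv_smul hball
  have hf0 : f 0 = 0 := by simp [hf]
  rw [hf0, smul_zero] at hC
  rw [circleIntegral] at hC
  simp only [deriv_circleMap, sub_zero, smul_eq_mul] at hC
  have key : ∀ θ : ℝ, circleMap 0 ρ θ * Complex.I * ((circleMap 0 ρ θ)⁻¹ * f (circleMap 0 ρ θ))
      = Complex.I * f (circleMap 0 ρ θ) := by
    intro θ
    have hne : circleMap 0 ρ θ ≠ 0 := circleMap_ne_center h0.ne'
    field_simp
  simp only [key] at hC
  rw [intervalIntegral.integral_const_mul] at hC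
  have := mul_eq_zero.1 hC
  rcases this with h | h
  · exact absurd h Complex.I_ne_zero
  · have : ∀ θ : ℝ, f (circleMap 0 ρ θ) =
        (Complex.log (1 - (ρ:ℂ) * Complex.exp (θ * Complex.I)))^2 := by
      intro θ; simp [hf, circleMap]
    rw [show (fun θ : ℝ => (Complex.log (1 - (ρ:ℂ) * Complex.exp (θ * Complex.I)))^2)
      = fun θ : ℝ => f (circleMap 0 ρ θ) from funext fun θ => (this θ).symm]
    exact h

lemma inv_sqrt_sin_le {θ : ℝ} (h0 : 0 < θ) (h1 : θ ≤ Real.pi) :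
    1 / Real.sqrt (Real.sin (θ/2)) ≤ Real.sqrt Real.pi * θ ^ (-(1/2) : ℝ) := by
  have hπ : (0:ℝ) < Real.pi := Real.pi_pos
  have hsin : θ / Real.pi ≤ Real.sin (θ/2) := by
    have := Real.mul_le_sin (x := θ/2) (by linarith) (by linarith)
    calc θ / Real.pi = 2 / Real.pi * (θ/2) := by field_simp
      _ ≤ Real.sin (θ/2) := this
  have hpos : 0 < θ / Real.pi := by positivity
  have h1' : 1 / Real.sqrt (Real.sin (θ/2)) ≤ 1 / Real.sqrt (θ / Real.pi) := by
    apply one_div_le_one_div_of_le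
    · exact Real.sqrt_pos.2 hpos
    · exact Real.sqrt_le_sqrt hsin
  have hθq : 0 < Real.sqrt θ := Real.sqrt_pos.2 h0
  have heq : 1 / Real.sqrt (θ / Real.pi) = Real.sqrt Real.pi * θ ^ (-(1/2) : ℝ) := by
    rw [Real.sqrt_div h0.le, Real.rpow_neg h0.le, ← Real.sqrt_eq_rpow]
    rw [one_div, inv_div]
    field_simp
  linarith [h1', heq.le, heq.ge]

lemma sqrt_sin_ptbound {θ : ℝ} (h0 : 0 < θ) (h2 : θ ≤ 2*Real.pi) :
    32 / Real.sqrt (Real.sin (θ/2)) ≤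
      32*Real.sqrt Real.pi*(θ ^ (-(1/2):ℝ) + (2*Real.pi-θ) ^ (-(1/2):ℝ)) := by
  have hπ : (0:ℝ) < Real.pi := Real.pi_pos
  have hr1 : (0:ℝ) ≤ θ ^ (-(1/2):ℝ) := Real.rpow_nonneg h0.le _
  have hr2 : (0:ℝ) ≤ (2*Real.pi-θ) ^ (-(1/2):ℝ) := Real.rpow_nonneg (by linarith) _
  have hsqπ : (0:ℝ) ≤ Real.sqrt Real.pi := Real.sqrt_nonneg _
  rcases eq_or_lt_of_le h2 with rfl | hlt
  · rw [show (2*Real.pi)/2 = Real.pi by ring, Real.sin_pi, Real.sqrt_zero, div_zero]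
    positivity
  rcases le_or_gt θ Real.pi with hle | hgt
  · have := inv_sqrt_sin_le h0 hle
    have : 32 / Real.sqrt (Real.sin (θ/2)) ≤ 32 * (Real.sqrt Real.pi * θ ^ (-(1/2):ℝ)) := by
      rw [div_eq_mul_one_div]
      nlinarith
    nlinarith
  · set φ := 2*Real.pi - θ with hφ
    have hφ0 : 0 < φ := by simp [hφ]; linarith
    have hφπ : φ ≤ Real.pi := by simp [hφ]; linarith
    have hsin : Real.sin (θ/2) = Real.sin (φ/2) := by
      rw [show θ/2 = Real.pi - φ/2 by simp [hφ]; ring, Real.sin_pi_sub]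
    have := inv_sqrt_sin_le hφ0 hφπ
    rw [hsin]
    have h32 : 32 / Real.sqrt (Real.sin (φ/2)) ≤ 32 * (Real.sqrt Real.pi * φ ^ (-(1/2):ℝ)) := by
      rw [div_eq_mul_one_div]
      nlinarith
    nlinarith

lemma bound_integrable :
    IntervalIntegrable (fun θ : ℝ => 2*(Real.pi + Real.log 2)^2 + 32 / Real.sqrt (Real.sin (θ/2)))
      MeasureTheory.volume 0 (2*Real.pi) := by
  have hπ : (0:ℝ) < Real.pi := Real.pi_pos
  have i1 : IntervalIntegrable (fun θ : ℝ => θ ^ (-(1/2):ℝ)) volume 0 (2*Real.pi) :=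
    intervalIntegrable_rpow' (by norm_num)
  have i2 : IntervalIntegrable (fun θ : ℝ => (2*Real.pi - θ) ^ (-(1/2):ℝ)) volume 0 (2*Real.pi) := by
    have := (i1.comp_sub_left (2*Real.pi)).symm
    simpa using this
  have iG : IntervalIntegrable
      (fun θ : ℝ => 32*Real.sqrt Real.pi*(θ ^ (-(1/2):ℝ) + (2*Real.pi-θ) ^ (-(1/2):ℝ)))
      volume 0 (2*Real.pi) := (i1.add i2).const_mul _
  have hmeas : AEStronglyMeasurable (fun θ : ℝ => 32 / Real.sqrt (Real.sin (θ/2)))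
      (volume.restrict (Set.uIoc 0 (2*Real.pi))) := by
    apply Measurable.aestronglyMeasurable
    have hc : Continuous fun θ : ℝ => Real.sqrt (Real.sin (θ/2)) :=
      Real.continuous_sqrt.comp (Real.continuous_sin.comp (continuous_id.div_const 2))
    simpa [div_eq_mul_inv] using (hc.measurable.inv.const_mul 32)
  have hsub : IntervalIntegrable (fun θ : ℝ => 32 / Real.sqrt (Real.sin (θ/2)))
      volume 0 (2*Real.pi) := by
    apply iG.mono_fun hmeas
    rw [Filter.EventuallyLE, ae_restrict_iff' measurableSet_uIoc]
    apply Filter.Eventually.of_forall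
    intro θ hθ
    rw [Set.uIoc_of_le (by positivity : (0:ℝ) ≤ 2*Real.pi)] at hθ
    have hb := sqrt_sin_ptbound hθ.1 hθ.2
    have h0 : (0:ℝ) ≤ 32 / Real.sqrt (Real.sin (θ/2)) := by positivity
    simp only [Real.norm_eq_abs, _root_.abs_of_nonneg h0, _root_.abs_of_nonneg (le_trans h0 hb)]
    exact hb
  exact (_root_.intervalIntegrable_const).add hsub

lemma slit_one (ρ θ : ℝ) (h0 : 0 ≤ ρ) (h1 : ρ < 1) :
    (1 - (ρ:ℂ) * Complex.exp (θ * Complex.I)) ∈ Complex.slitPlane := by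
  left
  simp only [Complex.sub_re, Complex.one_re, Complex.mul_re, Complex.ofReal_re,
    Complex.ofReal_im, Complex.exp_ofReal_mul_I_re, zero_mul, sub_zero]
  nlinarith [Real.cos_le_one θ, Real.neg_one_le_cos θ, h0]

lemma limit_integral_zero :
    ∫ θ in (0:ℝ)..(2*Real.pi), (Complex.log (1 - Complex.exp (θ * Complex.I)))^2 = 0 := by
  have hπ : (0:ℝ) < Real.pi := Real.pi_pos
  set F : ℝ → ℝ → ℂ := fun ρ θ => (Complex.log (1 - (ρ:ℂ) * Complex.exp (θ * Complex.I)))^2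
    with hF
  have hmem : Set.Ioo (0:ℝ) 1 ∈ nhdsWithin (1:ℝ) (Set.Iio 1) :=
    Ioo_mem_nhdsLT_of_mem (by constructor <;> norm_num)
  have hcont_inner : ∀ ρ : ℝ, Continuous fun θ : ℝ => 1 - (ρ:ℂ) * Complex.exp (θ * Complex.I) :=
    fun ρ => continuous_const.sub (continuous_const.mul
      (Complex.continuous_exp.comp (Complex.continuous_ofReal.mul continuous_const)))
  have htend : Tendsto (fun ρ => ∫ θ in (0:ℝ)..(2*Real.pi), F ρ θ)
      (nhdsWithin (1:ℝ) (Set.Iio 1))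
      (nhds (∫ θ in (0:ℝ)..(2*Real.pi), (Complex.log (1 - Complex.exp (θ * Complex.I)))^2)) := by
    apply intervalIntegral.tendsto_integral_filter_of_dominated_convergence
      (fun θ => 2*(Real.pi + Real.log 2)^2 + 32 / Real.sqrt (Real.sin (θ/2)))
    · filter_upwards [hmem] with ρ hρ
      apply Continuous.aestronglyMeasurable
      apply Continuous.pow
      apply continuous_iff_continuousAt.2
      intro θ
      exact ContinuousAt.clog (hcont_inner ρ).continuousAt (slit_one ρ θ hρ.1.le hρ.2)
    · filter_upwards [hmem] with ρ hρ
      have h2 : ∀ᵐ (θ : ℝ) ∂MeasureTheory.volume, θ ≠ 2*Real.pi := by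
        rw [MeasureTheory.ae_iff]
        simpa using MeasureTheory.measure_singleton (α := ℝ) (2*Real.pi)
      filter_upwards [h2] with θ hθ2 hθ
      rw [Set.uIoc_of_le (by positivity : (0:ℝ) ≤ 2*Real.pi)] at hθ
      have hlt : θ < 2*Real.pi := lt_of_le_of_ne hθ.2 hθ2
      have hsin : 0 < Real.sin (θ/2) := by
        apply Real.sin_pos_of_pos_of_lt_pi
        · linarith [hθ.1]
        · linarith
      exact norm_log_sq_bound ρ θ hρ.1.le hρ.2.le hsin
    · exact bound_integrable
    · have h2 : ∀ᵐ (θ : ℝ) ∂MeasureTheory.volume, θ ≠ 2*Real.pi := by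
        rw [MeasureTheory.ae_iff]
        simpa using MeasureTheory.measure_singleton (α := ℝ) (2*Real.pi)
      filter_upwards [h2] with θ hθ2 hθ
      rw [Set.uIoc_of_le (by positivity : (0:ℝ) ≤ 2*Real.pi)] at hθ
      have hlt : θ < 2*Real.pi := lt_of_le_of_ne hθ.2 hθ2
      have hslit : (1 - Complex.exp (θ * Complex.I)) ∈ Complex.slitPlane := by
        left
        have hcos : Real.cos θ < 1 := by
          rcases lt_or_eq_of_le (Real.cos_le_one θ) with h | h
          · exact h
          · exfalso
            have := (Real.cos_eq_one_iff_of_lt_of_lt (by linarith [hθ.1] : -(2*Real.pi) < θ)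
              (by linarith : θ < 2*Real.pi)).1 h
            linarith [hθ.1]
        simp only [Complex.sub_re, Complex.one_re, Complex.exp_ofReal_mul_I_re]
        linarith
      have hca : ContinuousAt (fun ρ : ℝ => F ρ θ) 1 := by
        apply ContinuousAt.pow
        apply ContinuousAt.clog
        · exact (continuous_const.sub
            (Complex.continuous_ofReal.mul continuous_const)).continuousAt
        · simpa using hslit
      have := hca.tendsto.mono_left (nhdsWithin_le_nhds (s := Set.Iio (1:ℝ)))
      simpa [hF] using this
  have hev : ∀ᶠ ρ in nhdsWithin (1:ℝ) (Set.Iio 1),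
      (fun ρ => ∫ θ in (0:ℝ)..(2*Real.pi), F ρ θ) ρ = 0 := by
    filter_upwards [hmem] with ρ hρ
    exact cauchy_step hρ.1 hρ.2
  have htend0 : Tendsto (fun ρ => ∫ θ in (0:ℝ)..(2*Real.pi), F ρ θ)
      (nhdsWithin (1:ℝ) (Set.Iio 1)) (nhds 0) := by
    rw [Filter.tendsto_congr' hev]
    exact tendsto_const_nhds
  exact tendsto_nhds_unique htend htend0

lemma log_one_sub_exp {θ : ℝ} (h0 : 0 < θ) (h2 : θ < 2*Real.pi) :
    Complex.log (1 - Complex.exp (θ * Complex.I)) =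
      (Real.log (2 * Real.sin (θ/2)) : ℂ) + ((θ/2 - Real.pi/2 : ℝ) : ℂ) * Complex.I := by
  have hπ : (0:ℝ) < Real.pi := Real.pi_pos
  have hs : 0 < Real.sin (θ/2) := Real.sin_pos_of_pos_of_lt_pi (by linarith) (by linarith)
  set c : ℂ := (Real.log (2 * Real.sin (θ/2)) : ℂ) + ((θ/2 - Real.pi/2 : ℝ) : ℂ) * Complex.I
    with hc
  have hcre : c.re = Real.log (2 * Real.sin (θ/2)) := by simp [hc]
  have hcim : c.im = θ/2 - Real.pi/2 := by simp [hc]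
  have hexp : Complex.exp c = 1 - Complex.exp (θ * Complex.I) := by
    apply Complex.ext
    · rw [Complex.exp_re, hcre, hcim, Real.exp_log (by positivity)]
      simp only [Complex.sub_re, Complex.one_re, Complex.exp_ofReal_mul_I_re]
      have hcos : Real.cos (θ/2 - Real.pi/2) = Real.sin (θ/2) := by
        rw [← Real.cos_neg, neg_sub, Real.cos_pi_div_two_sub]
      rw [hcos]
      have : Real.sin (θ/2)^2 = 1/2 - Real.cos (2*(θ/2))/2 := Real.sin_sq_eq_half_sub _
      rw [show 2*(θ/2) = θ by ring] at this
      nlinarith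
    · rw [Complex.exp_im, hcre, hcim, Real.exp_log (by positivity)]
      simp only [Complex.sub_im, Complex.one_im, Complex.exp_ofReal_mul_I_im]
      have hsin : Real.sin (θ/2 - Real.pi/2) = - Real.cos (θ/2) := by
        rw [← neg_neg (θ/2 - Real.pi/2), Real.sin_neg, neg_sub, Real.sin_pi_div_two_sub]
      rw [hsin]
      have : Real.sin (2*(θ/2)) = 2 * Real.sin (θ/2) * Real.cos (θ/2) := Real.sin_two_mul _
      rw [show 2*(θ/2) = θ by ring] at this
      nlinarith
  rw [← hexp, Complex.log_exp]
  · rw [hcim]; linarith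
  · rw [hcim]; linarith

lemma ae_ne_two_pi : ∀ᵐ (θ : ℝ) ∂MeasureTheory.volume, θ ≠ 2*Real.pi := by
  rw [MeasureTheory.ae_iff]
  simpa using MeasureTheory.measure_singleton (α := ℝ) (2*Real.pi)

lemma integral_sq_log_abs :
    ∫ θ in (0:ℝ)..(2*Real.pi),
      (Real.log (‖1 - Complex.exp (θ * Complex.I)‖))^2 = Real.pi^3/6 := by
  have hπ : (0:ℝ) < Real.pi := Real.pi_pos
  have hle : (0:ℝ) ≤ 2*Real.pi := by positivity
  set F1 : ℝ → ℂ := fun θ => (Complex.log (1 - Complex.exp (θ * Complex.I)))^2 with hF1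
  set u : ℝ → ℝ := fun θ => Real.log (‖1 - Complex.exp (θ * Complex.I)‖) with hu
  set v : ℝ → ℝ := fun θ => θ/2 - Real.pi/2 with hv
  set g : ℝ → ℝ := fun θ => 2*(Real.pi + Real.log 2)^2 + 32 / Real.sqrt (Real.sin (θ/2)) with hg
  have hg_int : IntegrableOn g (Set.Ioc 0 (2*Real.pi)) volume := by
    have := bound_integrable
    rw [intervalIntegrable_iff, Set.uIoc_of_le hle] at this
    exact this
  have hmeasF1 : AEStronglyMeasurable F1 (volume.restrict (Set.Ioc 0 (2*Real.pi))) := by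
    apply Measurable.aestronglyMeasurable
    have hin : Measurable fun θ : ℝ => 1 - Complex.exp (θ * Complex.I) :=
      (continuous_const.sub (Complex.continuous_exp.comp
        (Complex.continuous_ofReal.mul continuous_const))).measurable
    exact (Complex.measurable_log.comp hin).pow_const 2
  have hbound_ae : ∀ᵐ θ ∂(volume.restrict (Set.Ioc 0 (2*Real.pi))), ‖F1 θ‖ ≤ g θ := by
    rw [MeasureTheory.ae_restrict_iff' measurableSet_Ioc]
    filter_upwards [ae_ne_two_pi] with θ hθ2 hθ
    have hlt : θ < 2*Real.pi := lt_of_le_of_ne hθ.2 hθ2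
    have hsin : 0 < Real.sin (θ/2) :=
      Real.sin_pos_of_pos_of_lt_pi (by linarith [hθ.1]) (by linarith)
    have := norm_log_sq_bound 1 θ zero_le_one le_rfl hsin
    simpa [hF1, hg] using this
  have hIntF1 : IntegrableOn F1 (Set.Ioc 0 (2*Real.pi)) volume :=
    MeasureTheory.Integrable.mono' hg_int hmeasF1 hbound_ae
  have hzero : ∫ θ in Set.Ioc (0:ℝ) (2*Real.pi), F1 θ = 0 := by
    have := limit_integral_zero
    rwa [intervalIntegral.integral_of_le hle] at this
  have hre_zero : ∫ θ in Set.Ioc (0:ℝ) (2*Real.pi), (F1 θ).re = 0 := by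
    have := _root_.integral_re (μ := volume.restrict (Set.Ioc (0:ℝ) (2*Real.pi)))
      (f := F1) hIntF1
    rw [hzero] at this
    simpa using this
  have hre_eq : ∀ᵐ θ ∂(volume.restrict (Set.Ioc 0 (2*Real.pi))),
      (F1 θ).re = u θ^2 - v θ^2 := by
    rw [MeasureTheory.ae_restrict_iff' measurableSet_Ioc]
    filter_upwards [ae_ne_two_pi] with θ hθ2 hθ
    have hlt : θ < 2*Real.pi := lt_of_le_of_ne hθ.2 hθ2
    have hlog := log_one_sub_exp hθ.1 hlt
    have him : (Complex.log (1 - Complex.exp (θ * Complex.I))).im = θ/2 - Real.pi/2 := by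
      rw [hlog]; simp
    have hre : (Complex.log (1 - Complex.exp (θ * Complex.I))).re =
        Real.log (‖1 - Complex.exp (θ * Complex.I)‖) := Complex.log_re _
    simp only [hF1, pow_two, Complex.mul_re, hu, hv]
    rw [him, hre]
  have hsplit : ∫ θ in Set.Ioc (0:ℝ) (2*Real.pi), (u θ^2 - v θ^2) = 0 := by
    rw [← MeasureTheory.integral_congr_ae hre_eq]
    exact hre_zero
  have hIntuv : IntegrableOn (fun θ => u θ^2 - v θ^2) (Set.Ioc 0 (2*Real.pi)) volume :=
    (hIntF1.re).congr hre_eq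
  have hIntv : IntegrableOn (fun θ => v θ^2) (Set.Ioc 0 (2*Real.pi)) volume :=
    (((continuous_id.div_const 2).sub continuous_const).pow 2).integrableOn_Ioc
  have hvval : ∫ θ in (0:ℝ)..(2*Real.pi), v θ^2 = Real.pi^3/6 := by
    have hrw : (fun θ : ℝ => v θ^2) = fun θ : ℝ => (fun x : ℝ => x^2) ((1/2)*θ + (-(Real.pi/2))) :=
      funext fun θ => by simp only [hv]; ring
    rw [hrw, intervalIntegral.integral_comp_mul_add (fun x : ℝ => x^2) (by norm_num) (-(Real.pi/2))]
    rw [integral_pow]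
    simp only [smul_eq_mul]
    push_cast
    ring
  have hfinal : ∫ θ in Set.Ioc (0:ℝ) (2*Real.pi), u θ^2 = Real.pi^3/6 := by
    have hrw : (fun θ => u θ^2) = fun θ => (u θ^2 - v θ^2) + v θ^2 := funext fun θ => by ring
    rw [hrw, MeasureTheory.integral_add hIntuv hIntv, hsplit, zero_add,
      ← intervalIntegral.integral_of_le hle]
    exact hvval
  rw [intervalIntegral.integral_of_le hle]
  exact hfinal

theorem m_two_eq (r : ℂ) (hr : ‖r‖ = 1) :
    ∫ θ in (0:ℝ)..1,
        (Real.log (‖Complex.exp (2 * Real.pi * Complex.I * θ) - r‖)) ^ 2 =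
      Real.pi ^ 2 / 12 := by
  have hπ : (0:ℝ) < Real.pi := Real.pi_pos
  set G : ℝ → ℝ := fun t => (Real.log (‖1 - Complex.exp (t * Complex.I)‖))^2 with hG
  set a : ℝ := Complex.arg ((starRingEnd ℂ) r) with ha
  have hrne : r ≠ 0 := by
    intro h; rw [h] at hr; simp at hr
  have hcr : ‖(starRingEnd ℂ) r‖ = 1 := by
    rw [Complex.norm_conj]; exact hr
  have hexp_a : Complex.exp ((a:ℂ) * Complex.I) = (starRingEnd ℂ) r := by
    have := Complex.norm_mul_exp_arg_mul_I ((starRingEnd ℂ) r)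
    rw [hcr] at this
    simpa using this
  have hconj_mul : (starRingEnd ℂ) r * r = 1 := by
    rw [mul_comm, Complex.mul_conj, Complex.normSq_eq_norm_sq, hr]
    norm_num
  have hpoint : ∀ θ : ℝ,
      (Real.log (‖Complex.exp (2 * Real.pi * Complex.I * θ) - r‖)) ^ 2
        = G (2*Real.pi*θ + a) := by
    intro θ
    have harg : (2 * Real.pi * Complex.I * (θ:ℂ)) = ((2*Real.pi*θ : ℝ) : ℂ) * Complex.I := by
      push_cast; ring
    have hexp_sum : Complex.exp (((2*Real.pi*θ + a : ℝ) : ℂ) * Complex.I)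
        = Complex.exp (((2*Real.pi*θ : ℝ) : ℂ) * Complex.I) * (starRingEnd ℂ) r := by
      rw [← hexp_a, ← Complex.exp_add]
      congr 1
      push_cast; ring
    have habs : ‖1 - Complex.exp (((2*Real.pi*θ + a : ℝ) : ℂ) * Complex.I)‖
        = ‖Complex.exp (2 * Real.pi * Complex.I * (θ:ℂ)) - r‖ := by
      rw [hexp_sum, harg]
      have : (1 : ℂ) - Complex.exp (((2*Real.pi*θ : ℝ) : ℂ) * Complex.I) * (starRingEnd ℂ) r
          = (starRingEnd ℂ) r * (r - Complex.exp (((2*Real.pi*θ : ℝ) : ℂ) * Complex.I)) := by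
        rw [mul_sub, hconj_mul]; ring
      rw [this, norm_mul, hcr, one_mul, norm_sub_rev]
    rw [hG]
    simp only
    rw [habs]
  simp_rw [hpoint]
  have hcomp : ∫ θ in (0:ℝ)..1, G (2*Real.pi*θ + a)
      = (2*Real.pi)⁻¹ • ∫ t in (2*Real.pi*0 + a)..(2*Real.pi*1 + a), G t :=
    intervalIntegral.integral_comp_mul_add G (by positivity) a
  have hper : Function.Periodic G (2*Real.pi) := by
    intro t
    rw [hG]
    simp only
    congr 2
    rw [show ((t + 2*Real.pi : ℝ) : ℂ) * Complex.I
        = (t:ℂ) * Complex.I + 2*Real.pi*Complex.I by push_cast; ring,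
      Complex.exp_add, Complex.exp_two_pi_mul_I, mul_one]
  have hshift : ∫ t in (a)..(a + 2*Real.pi), G t = ∫ t in (0:ℝ)..(0 + 2*Real.pi), G t :=
    hper.intervalIntegral_add_eq a 0
  rw [hcomp, show 2*Real.pi*0 + a = a by ring, show 2*Real.pi*1 + a = a + 2*Real.pi by ring,
    hshift, zero_add, integral_sq_log_abs, smul_eq_mul]
  field_simp
  ring
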